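/- Let M be an NFA over Σ with single initial state q₀ in which all states are reachable from q₀. Let M' be obtained by adding a new symbol # with transitions on # from each final state of M to q₀, and then making all states of M' both initial and final. Then L(M) = Σ* if and only if L(M') = (Σ ∪ {#})*. -/

import Mathlib

open Classical in

theorem asif_construction_universality {α σ : Type} (M : NFA α σ) (q₀ : σ)
    (hstart : M.start = {q₀})
    (hreach : ∀ q : σ, ∃ w : List α, q ∈ M.evalFrom {q₀} w)
    (M' : NFA (Option α) σ)
    (hstep : ∀ q a, M'.step q (some a) = M.step q a)
    (hsharp : ∀ q, M'.step q none = (if q ∈ M.accept then {q₀} else ∅ : Set σ))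
    (hstart' : M'.start = Set.univ) (hacc' : M'.accept = Set.univ) :
    M.accepts = ⊤ ↔ M'.accepts = ⊤ := by
  have hmono : ∀ (S T : Set σ), S ⊆ T → ∀ w : List (Option α),
      M'.evalFrom S w ⊆ M'.evalFrom T w := by
    intro S T h w
    induction w generalizing S T with
    | nil => simpa using h
    | cons a w ih =>
      apply ih
      intro s hs
      rw [NFA.mem_stepSet] at hs ⊢
      obtain ⟨t, ht, hst⟩ := hs
      exact ⟨t, h ht, hst⟩
  constructor
  · intro hM
    have haccept : ∀ u : List α, ∃ qf, qf ∈ M.accept ∧ qf ∈ M.evalFrom {q₀} u := by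
      intro u
      have : u ∈ M.accepts := by rw [hM]; trivial
      rw [NFA.mem_accepts, hstart] at this
      exact this
    have key : ∀ x : List (Option α), ∃ u : List α,
        M.evalFrom {q₀} u ⊆ M'.evalFrom {q₀} x := by
      intro x
      induction x using List.reverseRecOn with
      | nil => exact ⟨[], le_refl _⟩
      | append_singleton x a ih =>
        obtain ⟨u, hu⟩ := ih
        cases a with
        | some b =>
          refine ⟨u ++ [b], ?_⟩
          rw [NFA.evalFrom_append, NFA.evalFrom_singleton, NFA.evalFrom_append, NFA.evalFrom_singleton]
          intro s hs
          rw [NFA.mem_stepSet] at hs ⊢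
          obtain ⟨t, ht, hst⟩ := hs
          exact ⟨t, hu ht, by rw [hstep]; exact hst⟩
        | none =>
          refine ⟨[], ?_⟩
          rw [NFA.evalFrom_nil, NFA.evalFrom_append, NFA.evalFrom_singleton]
          intro s hs
          rcases hs with rfl
          obtain ⟨qf, hqf, hqf'⟩ := haccept u
          rw [NFA.mem_stepSet]
          exact ⟨qf, hu hqf', by rw [hsharp, if_pos hqf]; rfl⟩
    ext x
    refine ⟨fun _ => trivial, fun _ => ?_⟩
    rw [NFA.mem_accepts, hstart', hacc']
    obtain ⟨u, hu⟩ := key x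
    obtain ⟨qf, _, hqf'⟩ := haccept u
    exact ⟨qf, trivial, hmono _ _ (Set.subset_univ _) x (hu hqf')⟩
  · intro hM'
    -- there is an accepting state
    have hone : ([none] : List (Option α)) ∈ M'.accepts := by rw [hM']; trivial
    rw [NFA.mem_accepts, hstart'] at hone
    obtain ⟨s, _, hs⟩ := hone
    rw [NFA.evalFrom_singleton, NFA.mem_stepSet] at hs
    obtain ⟨qf, _, hqf⟩ := hs
    have hqfacc : qf ∈ M.accept := by
      by_contra h
      rw [hsharp, if_neg h] at hqf
      exact hqf
    have hstepuniv : M'.stepSet Set.univ none = {q₀} := by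
      ext t
      rw [NFA.mem_stepSet]
      constructor
      · rintro ⟨r, _, hr⟩
        rw [hsharp] at hr
        split at hr
        · exact hr
        · exact absurd hr (Set.notMem_empty t)
      · rintro rfl
        exact ⟨qf, trivial, by rw [hsharp, if_pos hqfacc]; rfl⟩
    have hmapsome : ∀ (S : Set σ) (w : List α),
        M'.evalFrom S (w.map some) = M.evalFrom S w := by
      intro S w
      induction w generalizing S with
      | nil => rfl
      | cons a w ih =>
        show M'.evalFrom (M'.stepSet S (some a)) (w.map some)
            = M.evalFrom (M.stepSet S a) w
        have hS : M'.stepSet S (some a) = M.stepSet S a := by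
          ext t
          rw [NFA.mem_stepSet, NFA.mem_stepSet]
          simp_rw [hstep]
        rw [ih, hS]
    ext w
    refine ⟨fun _ => trivial, fun _ => ?_⟩
    have hw : (none :: (w.map some ++ [none]) : List (Option α)) ∈ M'.accepts := by
      rw [hM']; trivial
    rw [NFA.mem_accepts, hstart'] at hw
    obtain ⟨s, _, hs⟩ := hw
    have : M'.evalFrom Set.univ (none :: (w.map some ++ [none]))
        = M'.stepSet (M.evalFrom {q₀} w) none := by
      show M'.evalFrom (M'.stepSet Set.univ none) (w.map some ++ [none]) = _
      rw [hstepuniv, NFA.evalFrom_append, NFA.evalFrom_singleton, hmapsome]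
    rw [this, NFA.mem_stepSet] at hs
    obtain ⟨t, ht, hst⟩ := hs
    have htacc : t ∈ M.accept := by
      by_contra h
      rw [hsharp, if_neg h] at hst
      exact hst
    rw [NFA.mem_accepts, hstart]
    exact ⟨t, htacc, ht⟩
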